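/- Let A₀ ∈ ℝ^{n×n}, A₁ ∈ ℝ^{m×m} with A₁ − λI_m invertible, and b ∈ ℝ. Then the characteristic-type determinant of the corona block matrix satisfies det(A − λI) = det(A₁ − λI_m)^n · det(A₀ − (λ + b² χ_{A₁}(λ)) I_n), where χ_{A₁}(λ) = J_{1,m}(A₁ − λI_m)⁻¹ J_{m,1} and A = [[A₀, b J_{1,m} ⊗ I_n],[b J_{m,1} ⊗ I_n, A₁ ⊗ I_n]]. -/

import Mathlib

open Matrix Kronecker BigOperators

/-- The adjacency matrix of the corona product: blocks
`[[A₀, b·J_{1,m} ⊗ I_n],[b·J_{m,1} ⊗ I_n, A₁ ⊗ I_n]]`. -/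
noncomputable def coronaA (n m : ℕ) (A0 : Matrix (Fin n) (Fin n) ℝ)
    (A1 : Matrix (Fin m) (Fin m) ℝ) (b : ℝ) :
    Matrix (Fin n ⊕ Fin m × Fin n) (Fin n ⊕ Fin m × Fin n) ℝ :=
  Matrix.fromBlocks A0
    (Matrix.of fun i p => if p.2 = i then b else 0)
    (Matrix.of fun p i => if p.2 = i then b else 0)
    (A1 ⊗ₖ (1 : Matrix (Fin n) (Fin n) ℝ))

/-- The coronal of a matrix at `lam`: the sum of the entries of the resolvent
`(A − lam I)⁻¹`. -/
noncomputable def coronal (m : ℕ) (A : Matrix (Fin m) (Fin m) ℝ) (lam : ℝ) : ℝ :=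
  ∑ i, ∑ j, (A - lam • (1 : Matrix (Fin m) (Fin m) ℝ))⁻¹ i j

theorem corona_charpoly_via_coronal (n m : ℕ) (A0 : Matrix (Fin n) (Fin n) ℝ)
    (A1 : Matrix (Fin m) (Fin m) ℝ) (b lam : ℝ)
    (hinv : IsUnit (A1 - lam • (1 : Matrix (Fin m) (Fin m) ℝ)).det) :
    (coronaA n m A0 A1 b - lam • 1).det =
      (A1 - lam • (1 : Matrix (Fin m) (Fin m) ℝ)).det ^ n *
        (A0 - (lam + b ^ 2 * coronal m A1 lam) • (1 : Matrix (Fin n) (Fin n) ℝ)).det := by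
  set M : Matrix (Fin m) (Fin m) ℝ := A1 - lam • 1 with hM
  set B : Matrix (Fin n) (Fin m × Fin n) ℝ :=
    Matrix.of fun i p => if p.2 = i then b else 0 with hB
  set C : Matrix (Fin m × Fin n) (Fin n) ℝ :=
    Matrix.of fun p i => if p.2 = i then b else 0 with hC
  have hblock : coronaA n m A0 A1 b - lam • 1 =
      Matrix.fromBlocks (A0 - lam • 1) B C (M ⊗ₖ (1 : Matrix (Fin n) (Fin n) ℝ)) := by
    ext i j
    cases i <;> cases j <;>
      simp [coronaA, hB, hC, hM, Matrix.fromBlocks, Matrix.one_apply, Matrix.smul_apply,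
        kroneckerMap_apply, Matrix.sub_apply, Prod.ext_iff, ite_and] <;>
      split_ifs <;> ring
  have hDdet : IsUnit (M ⊗ₖ (1 : Matrix (Fin n) (Fin n) ℝ)).det := by
    rw [Matrix.det_kronecker]
    simpa using hinv.pow n
  haveI : Invertible (M ⊗ₖ (1 : Matrix (Fin n) (Fin n) ℝ)) :=
    (M ⊗ₖ (1 : Matrix (Fin n) (Fin n) ℝ)).invertibleOfIsUnitDet hDdet
  have hschur : B * (M ⊗ₖ (1 : Matrix (Fin n) (Fin n) ℝ))⁻¹ * C =
      (b ^ 2 * coronal m A1 lam) • (1 : Matrix (Fin n) (Fin n) ℝ) := by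
    rw [Matrix.inv_kronecker, inv_one]
    ext i j
    simp only [Matrix.mul_apply, hB, hC, Matrix.of_apply, kroneckerMap_apply,
      Matrix.one_apply, Fintype.sum_prod_type, Matrix.smul_apply, mul_ite, mul_one,
      mul_zero, ite_mul, zero_mul, Finset.sum_ite_eq, Finset.sum_ite_eq',
      Finset.mem_univ, if_true]
    by_cases h : i = j
    · subst h
      simp only [if_pos rfl, coronal, ← hM, if_true, smul_eq_mul, mul_one,
        Finset.sum_mul, Finset.mul_sum]
      rw [Finset.sum_comm]
      refine Finset.sum_congr rfl fun r _ => Finset.sum_congr rfl fun s _ => by ring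
    · have h' : ¬ j = i := fun hh => h hh.symm
      simp [if_neg h, if_neg h']
  rw [hblock, Matrix.det_fromBlocks₂₂, Matrix.invOf_eq_nonsing_inv, hschur,
    Matrix.det_kronecker]
  simp only [Matrix.det_one, one_pow, mul_one, Fintype.card_fin]
  congr 2
  rw [sub_sub, ← add_smul]
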